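/- In the caching line graph $\mathcal{L}$ from the projective-geometry construction, for any $(m+3)$-element set $Z = \{V_1, \dots, V_{m+3}\}$ of $t$-dimensional subspaces (each containing $W$) with $\dim(\sum_{i=1}^{m+3} V_i) = m+t+2$, the set $C_Z = \{(\{V_i, V_j\},\, Z \setminus \{V_i, V_j\}) : V_i, V_j \in Z,\ i \ne j\}$ is a clique of size $\binom{m+3}{2}$ in the graph $\overline{\mathcal{L}^2}$. -/

import Mathlib

lemma sup_dim_bound (F : Type) [Field F] (k t : ℕ) (ht : 1 ≤ t)
    (W : Submodule F (Fin k → F)) (hW : Module.finrank F W = t - 1)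
    (S : Finset (Submodule F (Fin k → F)))
    (hS : ∀ V ∈ S, Module.finrank F V = t ∧ W ≤ V) :
    Module.finrank F ↥(W ⊔ S.sup id) ≤ t - 1 + S.card := by
  classical
  revert hS
  induction S using Finset.induction_on with
  | empty => intro _; rw [Finset.sup_empty, sup_bot_eq]; simpa using hW.le
  | @insert a s ha ih =>
    intro hS
    have hUle := ih (fun V hV => hS V (Finset.mem_insert_of_mem hV))
    have ha' := hS a (Finset.mem_insert_self a s)
    rw [Finset.sup_insert]
    have heq : W ⊔ (id a ⊔ s.sup id) = a ⊔ (W ⊔ s.sup id) := by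
      simp only [id]
      rw [← sup_assoc, sup_comm W a, sup_assoc]
    rw [heq]
    have key := Submodule.finrank_sup_add_finrank_inf_eq a (W ⊔ s.sup id)
    have hinf : t - 1 ≤ Module.finrank F ↥(a ⊓ (W ⊔ s.sup id)) := by
      rw [← hW]
      exact Submodule.finrank_mono (le_inf ha'.2 le_sup_left)
    have hfa : Module.finrank F ↥a = t := ha'.1
    rw [Finset.card_insert_of_notMem ha]
    omega



/-- The square of a graph: vertices are adjacent iff they are distinct and joined by a
path of length at most 2 in `G`. -/
def sqGraph {α : Type*} (G : SimpleGraph α) : SimpleGraph α where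
  Adj u v := u ≠ v ∧ (G.Adj u v ∨ ∃ w, G.Adj u w ∧ G.Adj w v)
  symm := by
    constructor
    intro a b h
    refine ⟨h.1.symm, ?_⟩
    rcases h.2 with h' | ⟨w, h1, h2⟩
    · exact Or.inl h'.symm
    · exact Or.inr ⟨w, h2.symm, h1.symm⟩
  loopless := by constructor; intro a h; exact h.1 rfl

/-- In the projective-geometry caching line graph `L`, for any
`(m+3)`-set `Z` of `t`-dimensional subspaces containing `W` whose sum has dimension
`m+t+2`, the set `C_Z = {({Vᵢ,Vⱼ}, Z∖{Vᵢ,Vⱼ})}` is a clique of size `C(m+3,2)` in the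
complement of the square of `L`. -/
theorem stmt_13 (q k m t : ℕ) (hq : IsPrimePow q) (hm : 1 ≤ m) (ht : 1 ≤ t)
    (hk : m + t + 2 ≤ k)
    (F : Type) [Field F] [Fintype F] (hF : Fintype.card F = q)
    [DecidableEq (Submodule F (Fin k → F))]
    (W : Submodule F (Fin k → F)) (hW : Module.finrank F W = t - 1)
    (isVert : Finset (Submodule F (Fin k → F)) × Finset (Submodule F (Fin k → F)) → Prop)
    (hisVert : ∀ p, isVert p ↔
      p.1.card = 2 ∧ p.2.card = m + 1 ∧
      (∀ V ∈ p.1 ∪ p.2, Module.finrank F V = t ∧ W ≤ V) ∧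
      Module.finrank F ↥(p.1.sup id) = t + 1 ∧
      Module.finrank F ↥(p.2.sup id) = m + t ∧
      Module.finrank F ↥((p.1 ∪ p.2).sup id) = m + t + 2)
    (L : SimpleGraph (Finset (Submodule F (Fin k → F)) × Finset (Submodule F (Fin k → F))))
    (hL : ∀ u v, L.Adj u v ↔ u ≠ v ∧ isVert u ∧ isVert v ∧ (u.1 = v.1 ∨ u.2 = v.2))
    (Z : Finset (Submodule F (Fin k → F)))
    (hZcard : Z.card = m + 3)
    (hZel : ∀ V ∈ Z, Module.finrank F V = t ∧ W ≤ V)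
    (hZdim : Module.finrank F ↥(Z.sup id) = m + t + 2) :
    (sqGraph L)ᶜ.IsClique {p | ∃ X ⊆ Z, X.card = 2 ∧ p = (X, Z \ X)} ∧
    Set.ncard {p : Finset (Submodule F (Fin k → F)) × Finset (Submodule F (Fin k → F)) |
        ∃ X ⊆ Z, X.card = 2 ∧ p = (X, Z \ X)} = Nat.choose (m + 3) 2 := by
  classical
  -- no vertex of the form (X₁, Z \ X₂) for distinct 2-subsets X₁ ≠ X₂ of Z
  have hnv : ∀ (X₁ X₂ : Finset (Submodule F (Fin k → F))), X₁ ⊆ Z → X₂ ⊆ Z →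
      X₁.card = 2 → X₂.card = 2 → X₁ ≠ X₂ → ¬ isVert (X₁, Z \ X₂) := by
    intro X₁ X₂ h1 h2 c1 c2 hne hv
    rw [hisVert] at hv
    obtain ⟨-, -, -, -, -, hdim⟩ := hv
    obtain ⟨v, hv2, hv1⟩ : ∃ v ∈ X₂, v ∉ X₁ := by
      by_contra h
      push_neg at h
      exact hne ((Finset.eq_of_subset_of_card_le h (by omega)).symm)
    have hsub : (X₁ ∪ (Z \ X₂)) ⊆ Z.erase v := by
      intro x hx
      rw [Finset.mem_union] at hx
      rcases hx with hx | hx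
      · exact Finset.mem_erase.2 ⟨fun h => hv1 (h ▸ hx), h1 hx⟩
      · rw [Finset.mem_sdiff] at hx
        exact Finset.mem_erase.2 ⟨fun h => hx.2 (h ▸ hv2), hx.1⟩
    have hcarde : (Z.erase v).card = m + 2 := by
      rw [Finset.card_erase_of_mem (h2 hv2), hZcard]
      omega
    have hcard : (X₁ ∪ (Z \ X₂)).card ≤ m + 2 := hcarde ▸ Finset.card_le_card hsub
    have hbd := sup_dim_bound F k t ht W hW (X₁ ∪ (Z \ X₂))
      (fun V hV => hZel V (Finset.union_subset h1 (Finset.sdiff_subset) hV))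
    have hle : Module.finrank F ↥((X₁ ∪ (Z \ X₂)).sup id) ≤
        Module.finrank F ↥(W ⊔ (X₁ ∪ (Z \ X₂)).sup id) :=
      Submodule.finrank_mono le_sup_right
    simp only at hdim
    omega
  constructor
  · intro p₁ hp₁ p₂ hp₂ hne
    obtain ⟨X₁, hX1, c1, rfl⟩ := hp₁
    obtain ⟨X₂, hX2, c2, rfl⟩ := hp₂
    have hX : X₁ ≠ X₂ := fun h => hne (by rw [h])
    have hdiff : Z \ X₁ ≠ Z \ X₂ := by
      intro h
      apply hX
      have h' := congrArg (fun s => Z \ s) h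
      simpa [Finset.sdiff_sdiff_self_left, Finset.inf_eq_inter,
        Finset.inter_eq_right.2 hX1, Finset.inter_eq_right.2 hX2] using h'
    rw [SimpleGraph.compl_adj]
    refine ⟨hne, ?_⟩
    rintro ⟨-, hadj⟩
    rcases hadj with h | ⟨w, hw1, hw2⟩
    · rw [hL] at h
      rcases h.2.2.2 with h' | h'
      · exact hX h'
      · exact hdiff h'
    · rw [hL] at hw1 hw2
      obtain ⟨-, -, hvw, hc1⟩ := hw1
      obtain ⟨-, -, -, hc2⟩ := hw2
      simp only at hc1 hc2
      rcases hc1 with e1 | e1 <;> rcases hc2 with e2 | e2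
      · exact hX (e1.trans e2)
      · refine hnv X₁ X₂ hX1 hX2 c1 c2 hX ?_
        have hwe : w = (X₁, Z \ X₂) := Prod.ext e1.symm e2
        rwa [hwe] at hvw
      · refine hnv X₂ X₁ hX2 hX1 c2 c1 hX.symm ?_
        have hwe : w = (X₂, Z \ X₁) := Prod.ext e2 e1.symm
        rwa [hwe] at hvw
      · exact hdiff (e1.trans e2)
  · have hset : {p : Finset (Submodule F (Fin k → F)) × Finset (Submodule F (Fin k → F)) |
        ∃ X ⊆ Z, X.card = 2 ∧ p = (X, Z \ X)} =
        ↑((Z.powersetCard 2).image (fun X => (X, Z \ X))) := by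
      ext p
      simp only [Set.mem_setOf_eq, Finset.coe_image, Set.mem_image, Finset.mem_coe,
        Finset.mem_powersetCard]
      constructor
      · rintro ⟨X, hX, hc, rfl⟩; exact ⟨X, ⟨hX, hc⟩, rfl⟩
      · rintro ⟨X, ⟨hX, hc⟩, rfl⟩; exact ⟨X, hX, hc, rfl⟩
    rw [hset, Set.ncard_coe_finset,
      Finset.card_image_of_injective _ (fun a b h => (Prod.ext_iff.1 h).1),
      Finset.card_powersetCard, hZcard]
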